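/- For any j = 1, …, k, the map A_{k−j+1} → S^{2(n−j)+1} sending an isometric linear map f: ℂ^k → ℂ^n to the image f(e_j) of the basis vector e_j is a fiber bundle whose fiber over the point i·e_j is A_{k−j}. -/

import Mathlib

open Metric

noncomputable section

/-- The space of continuous `ℂ`-linear maps `ℂ^k → ℂ^n`. -/
abbrev CLMSpace (k n : ℕ) : Type :=
  EuclideanSpace ℂ (Fin k) →L[ℂ] EuclideanSpace ℂ (Fin n)

/-- The `i`-th standard basis vector of `ℂ^k`. -/
abbrev basisVec (k : ℕ) (i : Fin k) : EuclideanSpace ℂ (Fin k) :=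
  EuclideanSpace.single i 1

/-- The Stiefel manifold `V_k(ℂ^n)`, as the set of isometric `ℂ`-linear maps. -/
def stiefelSet (k n : ℕ) : Set (CLMSpace k n) :=
  {f | ∀ x, ‖f x‖ = ‖x‖}

/-- The set `A_{k−j} ⊂ V_k(ℂ^n)` of isometric linear maps sending the first `j` basis
vectors `e_1, …, e_j` to `i·e_1, …, i·e_j`. -/
def setA (k n j : ℕ) (hkn : k ≤ n) : Set (CLMSpace k n) :=
  {f ∈ stiefelSet k n | ∀ i : Fin k, (i : ℕ) < j →
    f (basisVec k i) = Complex.I • basisVec n (Fin.castLE hkn i)}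

/-- The unit sphere of the subspace of `ℂ^n` of vectors orthogonal to `e_1, …, e_j`
(a sphere of dimension `2(n−j)−1`). -/
def baseSphere (n j : ℕ) : Set (EuclideanSpace ℂ (Fin n)) :=
  {v | ‖v‖ = 1 ∧ ∀ i : Fin n, (i : ℕ) < j → inner ℂ (basisVec n i) v = (0 : ℂ)}

/-- `p : Z → E` is a fiber bundle over the subset `B ⊆ E` with fiber `F`: the range of `p`
lies in `B`, and every point of `B` has a relatively open neighbourhood `U ⊆ B` over which
`p` is trivial with fiber `F`. -/
def IsFiberBundleOn {Z E : Type} [TopologicalSpace Z] [TopologicalSpace E]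
    (p : Z → E) (B : Set E) (F : Type) [TopologicalSpace F] : Prop :=
  Set.range p ⊆ B ∧
    ∀ b ∈ B, ∃ U : Set E, (∃ V : Set E, IsOpen V ∧ U = V ∩ B) ∧ b ∈ U ∧
      ∃ e : {z : Z // p z ∈ U} ≃ₜ U × F, ∀ z, ((e z).1 : E) = p z.1

namespace RotAux

variable {E : Type} [NormedAddCommGroup E] [InnerProductSpace ℂ E]

local notation "⟪" x ", " y "⟫" => @inner ℂ _ _ x y

/-- The canonical "rotation" sending `a` to `v`, identity on the orthocomplement. -/
def rotCLM (a v : E) : E →L[ℂ] E :=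
  ContinuousLinearMap.id ℂ E
    - (1 + ⟪v, a⟫)⁻¹ • ((innerSL ℂ a + innerSL ℂ v).smulRight (a + v))
    + (2 : ℂ) • ((innerSL ℂ a).smulRight v)

lemma rotCLM_apply (a v x : E) :
    rotCLM a v x =
      x - ((1 + ⟪v, a⟫)⁻¹ * (⟪a, x⟫ + ⟪v, x⟫)) • (a + v) + (2 * ⟪a, x⟫) • v := by
  simp [rotCLM, smul_smul]

lemma rotCLM_fst {a : E} (ha : ⟪a, a⟫ = 1) {v : E} (hd : (1 : ℂ) + ⟪v, a⟫ ≠ 0) :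
    rotCLM a v a = v := by
  rw [rotCLM_apply, ha]
  match_scalars <;> field_simp <;> ring

lemma rotCLM_fixes {a v x : E} (h1 : ⟪a, x⟫ = 0) (h2 : ⟪v, x⟫ = 0) :
    rotCLM a v x = x := by
  rw [rotCLM_apply, h1, h2]; simp

lemma rotCLM_inverse {a v : E} (ha : ⟪a, a⟫ = 1) (hv : ⟪v, v⟫ = 1)
    (hd : (1 : ℂ) + ⟪v, a⟫ ≠ 0) (hd' : (1 : ℂ) + ⟪a, v⟫ ≠ 0) (x : E) :
    rotCLM v a (rotCLM a v x) = x := by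
  rw [rotCLM_apply, rotCLM_apply]
  simp only [inner_add_right, inner_sub_right, inner_smul_right, ha, hv]
  match_scalars <;> field_simp <;> ring

lemma rotCLM_inner_self {a v : E} (ha : ⟪a, a⟫ = 1) (hv : ⟪v, v⟫ = 1)
    (hd : (1 : ℂ) + ⟪v, a⟫ ≠ 0) (x : E) :
    ⟪rotCLM a v x, rotCLM a v x⟫ = ⟪x, x⟫ := by
  have hd' : (1 : ℂ) + ⟪a, v⟫ ≠ 0 := by
    intro h; apply hd
    have := congrArg (starRingEnd ℂ) h
    simpa [inner_conj_symm] using this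
  rw [rotCLM_apply]
  simp only [inner_add_left, inner_add_right, inner_sub_left, inner_sub_right,
    inner_smul_left, inner_smul_right, map_mul, map_add, map_inv₀, map_one, map_ofNat,
    inner_conj_symm, ha, hv]
  field_simp
  ring

lemma norm_eq_of_inner_self {x y : E} (h : ⟪x, x⟫ = ⟪y, y⟫) : ‖x‖ = ‖y‖ := by
  rw [inner_self_eq_norm_sq_to_K, inner_self_eq_norm_sq_to_K] at h
  have h2 : (‖x‖ : ℝ) ^ 2 = ‖y‖ ^ 2 := by exact_mod_cast h
  nlinarith [norm_nonneg x, norm_nonneg y]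

lemma inner_self_one {x : E} (h : ‖x‖ = 1) : ⟪x, x⟫ = 1 := by
  rw [inner_self_eq_norm_sq_to_K, h]; norm_num

lemma norm_rotCLM {a v : E} (ha : ‖a‖ = 1) (hv : ‖v‖ = 1)
    (hd : (1 : ℂ) + ⟪v, a⟫ ≠ 0) (x : E) : ‖rotCLM a v x‖ = ‖x‖ :=
  norm_eq_of_inner_self (rotCLM_inner_self (inner_self_one ha) (inner_self_one hv) hd x)

/-- Reflection in the hyperplane orthogonal to `a`. -/
def reflCLM (a : E) : E →L[ℂ] E :=
  ContinuousLinearMap.id ℂ E - (2 : ℂ) • ((innerSL ℂ a).smulRight a)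

lemma reflCLM_apply (a x : E) : reflCLM a x = x - (2 * ⟪a, x⟫) • a := by
  simp [reflCLM, smul_smul]

lemma reflCLM_inner_self {a : E} (ha : ⟪a, a⟫ = 1) (x : E) :
    ⟪reflCLM a x, reflCLM a x⟫ = ⟪x, x⟫ := by
  rw [reflCLM_apply]
  simp only [inner_sub_left, inner_sub_right, inner_smul_left, inner_smul_right,
    map_mul, map_ofNat, inner_conj_symm, ha]
  ring

lemma norm_reflCLM {a : E} (ha : ‖a‖ = 1) (x : E) : ‖reflCLM a x‖ = ‖x‖ :=
  norm_eq_of_inner_self (reflCLM_inner_self (inner_self_one ha) x)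

lemma reflCLM_involutive {a : E} (ha : ⟪a, a⟫ = 1) (x : E) :
    reflCLM a (reflCLM a x) = x := by
  rw [reflCLM_apply, reflCLM_apply]
  simp only [inner_sub_right, inner_smul_right, ha]
  match_scalars <;> ring

lemma reflCLM_fixes {a x : E} (h : ⟪a, x⟫ = 0) : reflCLM a x = x := by
  rw [reflCLM_apply, h]; simp

lemma reflCLM_neg {a : E} (ha : ⟪a, a⟫ = 1) : reflCLM a (-a) = a := by
  rw [reflCLM_apply]
  simp only [inner_neg_right, ha]
  match_scalars <;> ring

lemma continuousOn_rot_right (a : E) :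
    ContinuousOn (fun v => rotCLM a v) {v : E | (1 : ℂ) + ⟪v, a⟫ ≠ 0} := by
  have h1 : Continuous fun v : E => innerSL ℂ v := (innerSL ℂ (E := E)).continuous
  have hsR : Continuous fun p : (E →L[ℂ] ℂ) × E => p.1.smulRight p.2 :=
    isBoundedBilinearMap_smulRight.continuous
  have h2 : Continuous fun v : E => (innerSL ℂ a + innerSL ℂ v).smulRight (a + v) :=
    hsR.comp₂ (continuous_const.add h1) (continuous_const.add continuous_id)
  have h3 : ContinuousOn (fun v : E => ((1 : ℂ) + ⟪v, a⟫)⁻¹)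
      {v : E | (1 : ℂ) + ⟪v, a⟫ ≠ 0} := by
    apply ContinuousOn.inv₀
    · exact (continuous_const.add (continuous_id.inner continuous_const)).continuousOn
    · exact fun v hv => hv
  have h4 : Continuous fun v : E => (innerSL ℂ a).smulRight v :=
    hsR.comp₂ continuous_const continuous_id
  exact (continuousOn_const.sub (h3.smul h2.continuousOn)).add
    ((h4.continuousOn.const_smul (2 : ℂ)))

lemma continuousOn_rot_left (b : E) :
    ContinuousOn (fun v => rotCLM v b) {v : E | (1 : ℂ) + ⟪b, v⟫ ≠ 0} := by
  have h1 : Continuous fun v : E => innerSL ℂ v := (innerSL ℂ (E := E)).continuous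
  have hsR : Continuous fun p : (E →L[ℂ] ℂ) × E => p.1.smulRight p.2 :=
    isBoundedBilinearMap_smulRight.continuous
  have h2 : Continuous fun v : E => (innerSL ℂ v + innerSL ℂ b).smulRight (v + b) :=
    hsR.comp₂ (h1.add continuous_const) (continuous_id.add continuous_const)
  have h3 : ContinuousOn (fun v : E => ((1 : ℂ) + ⟪b, v⟫)⁻¹)
      {v : E | (1 : ℂ) + ⟪b, v⟫ ≠ 0} := by
    apply ContinuousOn.inv₀
    · exact (continuous_const.add (continuous_const.inner continuous_id)).continuousOn
    · exact fun v hv => hv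
  have h4 : Continuous fun v : E => (innerSL ℂ v).smulRight b :=
    hsR.comp₂ h1 continuous_const
  exact (continuousOn_const.sub (h3.smul h2.continuousOn)).add
    ((h4.continuousOn.const_smul (2 : ℂ)))

lemma denom_conj_ne {x y : E} (h : (1 : ℂ) + ⟪x, y⟫ ≠ 0) : (1 : ℂ) + ⟪y, x⟫ ≠ 0 := by
  intro h0; apply h
  have := congrArg (starRingEnd ℂ) h0
  simpa [inner_conj_symm] using this

end RotAux

open RotAux

/-- Isometric continuous linear maps preserve the inner product. -/
lemma stiefel_inner {k n : ℕ} {f : CLMSpace k n} (hf : f ∈ stiefelSet k n)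
    (x y : EuclideanSpace ℂ (Fin k)) : (inner ℂ (f x) (f y) : ℂ) = inner ℂ x y :=
  LinearIsometry.inner_map_map ⟨(f : EuclideanSpace ℂ (Fin k) →ₗ[ℂ] EuclideanSpace ℂ (Fin n)), hf⟩ x y

lemma smul_basis_mem_baseSphere {n m : ℕ} {i0 : Fin n} (h : m ≤ (i0 : ℕ)) :
    Complex.I • basisVec n i0 ∈ baseSphere n m := by
  constructor
  · rw [norm_smul, EuclideanSpace.norm_single]
    simp [Complex.norm_I]
  · intro i hi
    rw [inner_smul_right, EuclideanSpace.inner_single_left]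
    have : i ≠ i0 := by intro h0; rw [h0] at hi; omega
    simp [EuclideanSpace.single_apply, this]

lemma sphere_inner_smul_basis {n m : ℕ} {w : EuclideanSpace ℂ (Fin n)}
    (hw : w ∈ baseSphere n m) {i : Fin n} (hi : (i : ℕ) < m) :
    (inner ℂ w (Complex.I • basisVec n i) : ℂ) = 0 := by
  rw [inner_smul_right]
  have h0 : (inner ℂ (basisVec n i) w : ℂ) = 0 := hw.2 i hi
  have : (inner ℂ w (basisVec n i) : ℂ) = 0 := by
    have := congrArg (starRingEnd ℂ) h0
    simpa [inner_conj_symm] using this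
  rw [this, mul_zero]

/-- The evaluation of an element of `setA k n m` at `e_{m+1}` lies in `baseSphere n m`. -/
lemma eval_mem_baseSphere {k n m : ℕ} {hkn : k ≤ n} {f : CLMSpace k n}
    (hf : f ∈ setA k n m hkn) (hm : m < k) :
    f (basisVec k ⟨m, hm⟩) ∈ baseSphere n m := by
  constructor
  · rw [hf.1 (basisVec k ⟨m, hm⟩), EuclideanSpace.norm_single, norm_one]
  · intro i hi
    have hik : (i : ℕ) < k := lt_trans hi hm
    have h1 := stiefel_inner hf.1 (basisVec k ⟨i, hik⟩) (basisVec k ⟨m, hm⟩)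
    rw [hf.2 ⟨i, hik⟩ hi] at h1
    have hcast : Fin.castLE hkn ⟨(i : ℕ), hik⟩ = i := by ext; rfl
    rw [hcast] at h1
    rw [inner_smul_left] at h1
    have h2 : (inner ℂ (basisVec k ⟨(i : ℕ), hik⟩) (basisVec k ⟨m, hm⟩) : ℂ) = 0 := by
      rw [EuclideanSpace.inner_single_left]
      have : (⟨(i : ℕ), hik⟩ : Fin k) ≠ (⟨m, hm⟩ : Fin k) := by
        simp [Fin.ext_iff]; omega
      simp [EuclideanSpace.single_apply, this]
    rw [h2] at h1
    have hI : (starRingEnd ℂ) Complex.I ≠ 0 := by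
      simp [Complex.conj_I, Complex.I_ne_zero]
    exact (mul_eq_zero.mp h1).resolve_left hI

/-- The evaluation map `A_{k−j+1} → S^{2(n−j)+1}`, `f ↦ f(e_j)`, is a fiber bundle with
fiber `A_{k−j}`, and its fiber over the point `i·e_j` is exactly `A_{k−j}`. -/
theorem setA_evaluation_isFiberBundle (k n j : ℕ) (hkn : k ≤ n) (hj1 : 1 ≤ j) (hjk : j ≤ k) :
    IsFiberBundleOn
      (fun f : ↥(setA k n (j - 1) hkn) =>
        (f : CLMSpace k n) (basisVec k ⟨j - 1, by omega⟩))
      (baseSphere n (j - 1)) ↥(setA k n j hkn) ∧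
    {f ∈ setA k n (j - 1) hkn |
        f (basisVec k ⟨j - 1, by omega⟩) =
          Complex.I • basisVec n (Fin.castLE hkn ⟨j - 1, by omega⟩)} =
      setA k n j hkn := by
  have hj1k : j - 1 < k := by omega
  show IsFiberBundleOn
      (fun f : ↥(setA k n (j - 1) hkn) =>
        (f : CLMSpace k n) (basisVec k ⟨j - 1, hj1k⟩))
      (baseSphere n (j - 1)) ↥(setA k n j hkn) ∧
    {f ∈ setA k n (j - 1) hkn |
        f (basisVec k ⟨j - 1, hj1k⟩) =
          Complex.I • basisVec n (Fin.castLE hkn ⟨j - 1, hj1k⟩)} =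
      setA k n j hkn
  constructor
  · constructor
    · rintro v ⟨f, rfl⟩
      exact eval_mem_baseSphere f.2 hj1k
    · intro b hb
      obtain ⟨a0, ha0def⟩ : ∃ a0 : EuclideanSpace ℂ (Fin n),
          a0 = Complex.I • basisVec n (Fin.castLE hkn ⟨j - 1, hj1k⟩) := ⟨_, rfl⟩
      have ha0B : a0 ∈ baseSphere n (j - 1) := by
        rw [ha0def]; exact smul_basis_mem_baseSphere (Nat.le_refl _)
      have hbn : ‖b‖ = 1 := hb.1
      have ha0n : ‖a0‖ = 1 := ha0B.1
      have hbb : (inner ℂ b b : ℂ) = 1 := inner_self_one hbn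
      have ha0a0 : (inner ℂ a0 a0 : ℂ) = 1 := inner_self_one ha0n
      -- a unitary transport sending `b` to `a0`
      obtain ⟨T, Tinv, hTn, hTin, hTb, hTIT, hTTI, hTfix, hTifix⟩ :
        ∃ T Tinv : EuclideanSpace ℂ (Fin n) →L[ℂ] EuclideanSpace ℂ (Fin n),
          (∀ x, ‖T x‖ = ‖x‖) ∧ (∀ x, ‖Tinv x‖ = ‖x‖) ∧ T b = a0 ∧
          (∀ x, Tinv (T x) = x) ∧ (∀ x, T (Tinv x) = x) ∧
          (∀ x, (inner ℂ b x : ℂ) = 0 → (inner ℂ a0 x : ℂ) = 0 → T x = x) ∧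
          (∀ x, (inner ℂ b x : ℂ) = 0 → (inner ℂ a0 x : ℂ) = 0 → Tinv x = x) := by
        by_cases hcase : (1 : ℂ) + (inner ℂ a0 b : ℂ) ≠ 0
        · exact ⟨rotCLM b a0, rotCLM a0 b,
            norm_rotCLM hbn ha0n hcase,
            norm_rotCLM ha0n hbn (denom_conj_ne hcase),
            rotCLM_fst hbb hcase,
            rotCLM_inverse hbb ha0a0 hcase (denom_conj_ne hcase),
            rotCLM_inverse ha0a0 hbb (denom_conj_ne hcase) hcase,
            fun x h1 h2 => rotCLM_fixes h1 h2,
            fun x h1 h2 => rotCLM_fixes h2 h1⟩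
        · push_neg at hcase
          have hba : b = -a0 := by
            have h1 : (inner ℂ a0 b : ℂ) = -1 := by linear_combination hcase
            have h2 : ‖a0 + b‖ ^ 2 = 0 := by
              rw [@norm_add_sq ℂ, h1, ha0n, hbn]
              norm_num
            have h3 : a0 + b = 0 := by
              have := pow_eq_zero_iff (n := 2) (by norm_num) |>.mp h2
              exact norm_eq_zero.mp this
            exact eq_neg_of_add_eq_zero_right h3
          refine ⟨reflCLM a0, reflCLM a0, norm_reflCLM ha0n, norm_reflCLM ha0n, ?_,
            reflCLM_involutive ha0a0, reflCLM_involutive ha0a0,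
            fun x _ h2 => reflCLM_fixes h2, fun x _ h2 => reflCLM_fixes h2⟩
          rw [hba]
          exact reflCLM_neg ha0a0
      refine ⟨{v : EuclideanSpace ℂ (Fin n) | (1 : ℂ) + inner ℂ b v ≠ 0} ∩ baseSphere n (j - 1),
        ⟨_, ?_, rfl⟩, ⟨?_, hb⟩, ?_⟩
      · exact isOpen_compl_singleton.preimage
          (continuous_const.add (continuous_const.inner continuous_id))
      · show (1 : ℂ) + inner ℂ b b ≠ 0
        rw [hbb]; norm_num
      -- the local trivialization
      set U : Set (EuclideanSpace ℂ (Fin n)) :=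
        {v : EuclideanSpace ℂ (Fin n) | (1 : ℂ) + inner ℂ b v ≠ 0} ∩ baseSphere n (j - 1) with hU
      set ejk : EuclideanSpace ℂ (Fin k) := basisVec k ⟨j - 1, hj1k⟩ with hejk
      have htoFun_mem : ∀ z : {z : ↥(setA k n (j - 1) hkn) //
            (z : CLMSpace k n) ejk ∈ U},
          T.comp ((rotCLM ((z.1 : CLMSpace k n) ejk) b).comp (z.1 : CLMSpace k n))
            ∈ setA k n j hkn := by
        rintro ⟨⟨f, hfA⟩, hfU⟩
        have hvB : f ejk ∈ baseSphere n (j - 1) := hfU.2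
        have hvd : (1 : ℂ) + inner ℂ b (f ejk) ≠ 0 := hfU.1
        have hvn : ‖f ejk‖ = 1 := hvB.1
        constructor
        · intro x
          simp only [ContinuousLinearMap.comp_apply]
          rw [hTn, norm_rotCLM hvn hbn hvd]
          exact hfA.1 x
        · intro i hi
          simp only [ContinuousLinearMap.comp_apply]
          rcases Nat.lt_or_ge (i : ℕ) (j - 1) with hlt | hge
          · rw [hfA.2 i hlt]
            have hio : ((Fin.castLE hkn i : Fin n) : ℕ) < j - 1 := hlt
            rw [rotCLM_fixes (sphere_inner_smul_basis hvB hio) (sphere_inner_smul_basis hb hio)]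
            exact hTfix _ (sphere_inner_smul_basis hb hio) (sphere_inner_smul_basis ha0B hio)
          · have hieq : i = (⟨j - 1, hj1k⟩ : Fin k) := by
              apply Fin.ext; simp only []; omega
            rw [hieq]
            rw [show f (basisVec k ⟨j - 1, hj1k⟩) = f ejk from rfl]
            rw [rotCLM_fst (inner_self_one hvn) hvd, hTb, ha0def]
      have hinv_mem : ∀ u ∈ U, ∀ g ∈ setA k n j hkn,
          (rotCLM b u).comp (Tinv.comp g) ∈ setA k n (j - 1) hkn := by
        intro u hu g hg
        have hun : ‖u‖ = 1 := hu.2.1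
        have hud : (1 : ℂ) + inner ℂ u b ≠ 0 := denom_conj_ne hu.1
        constructor
        · intro x
          simp only [ContinuousLinearMap.comp_apply]
          rw [norm_rotCLM hbn hun hud, hTin]
          exact hg.1 x
        · intro i hi
          have hij : (i : ℕ) < j := by omega
          simp only [ContinuousLinearMap.comp_apply]
          rw [hg.2 i hij]
          have hio : ((Fin.castLE hkn i : Fin n) : ℕ) < j - 1 := hi
          rw [hTifix _ (sphere_inner_smul_basis hb hio) (sphere_inner_smul_basis ha0B hio)]
          exact rotCLM_fixes (sphere_inner_smul_basis hb hio) (sphere_inner_smul_basis hu.2 hio)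
      have hinv_eval : ∀ u ∈ U, ∀ g ∈ setA k n j hkn,
          ((rotCLM b u).comp (Tinv.comp g)) ejk = u := by
        intro u hu g hg
        simp only [ContinuousLinearMap.comp_apply]
        rw [hejk, hg.2 ⟨j - 1, hj1k⟩ (by simp only []; omega), ← ha0def]
        have h1 : Tinv a0 = b := by rw [← hTb, hTIT]
        rw [h1]
        exact rotCLM_fst hbb (denom_conj_ne hu.1)
      have hinv_memU : ∀ u ∈ U, ∀ g ∈ setA k n j hkn,
          ((rotCLM b u).comp (Tinv.comp g)) ejk ∈ U := by
        intro u hu g hg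
        rw [hinv_eval u hu g hg]
        exact hu
      refine ⟨⟨⟨fun z => (⟨(z.1 : CLMSpace k n) ejk, z.2⟩,
          ⟨T.comp ((rotCLM ((z.1 : CLMSpace k n) ejk) b).comp (z.1 : CLMSpace k n)),
            htoFun_mem z⟩),
        fun w => ⟨⟨(rotCLM b (w.1 : EuclideanSpace ℂ (Fin n))).comp
            (Tinv.comp (w.2 : CLMSpace k n)),
            hinv_mem w.1 w.1.2 w.2 w.2.2⟩,
          hinv_memU w.1 w.1.2 w.2 w.2.2⟩, ?_, ?_⟩, ?_, ?_⟩, fun z => rfl⟩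
      · -- left inverse
        rintro ⟨⟨f, hfA⟩, hfU⟩
        apply Subtype.ext
        apply Subtype.ext
        have hvB : f ejk ∈ baseSphere n (j - 1) := hfU.2
        have hvd : (1 : ℂ) + inner ℂ b (f ejk) ≠ 0 := hfU.1
        have hvv : (inner ℂ (f ejk) (f ejk) : ℂ) = 1 := inner_self_one hvB.1
        show (rotCLM b (f ejk)).comp
            (Tinv.comp (T.comp ((rotCLM (f ejk) b).comp f))) = f
        ext x
        simp only [ContinuousLinearMap.comp_apply]
        rw [hTIT, rotCLM_inverse hvv hbb hvd (denom_conj_ne hvd)]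
      · -- right inverse
        rintro ⟨⟨u, hu⟩, ⟨g, hg⟩⟩
        have huu : (inner ℂ u u : ℂ) = 1 := inner_self_one hu.2.1
        have heval := hinv_eval u hu g hg
        apply Prod.ext
        · exact Subtype.ext heval
        · apply Subtype.ext
          show T.comp ((rotCLM (((rotCLM b u).comp (Tinv.comp g)) ejk) b).comp
            ((rotCLM b u).comp (Tinv.comp g))) = g
          rw [heval]
          ext x
          simp only [ContinuousLinearMap.comp_apply]
          rw [rotCLM_inverse hbb huu (denom_conj_ne hu.1) hu.1, hTTI]
      · -- continuity of toFun
        have hf : Continuous fun z : {z : ↥(setA k n (j - 1) hkn) //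
              (z : CLMSpace k n) ejk ∈ U} => (z.1 : CLMSpace k n) :=
          continuous_subtype_val.comp continuous_subtype_val
        have hev : Continuous fun z : {z : ↥(setA k n (j - 1) hkn) //
              (z : CLMSpace k n) ejk ∈ U} => (z.1 : CLMSpace k n) ejk :=
          isBoundedBilinearMap_apply.continuous.comp₂ hf continuous_const
        have hrot : Continuous fun z : {z : ↥(setA k n (j - 1) hkn) //
              (z : CLMSpace k n) ejk ∈ U} => rotCLM ((z.1 : CLMSpace k n) ejk) b :=
          (continuousOn_rot_left b).comp_continuous hev (fun z => z.2.1)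
        have hcomp1 := isBoundedBilinearMap_comp.continuous.comp₂ hrot hf
        have hcomp2 := isBoundedBilinearMap_comp.continuous.comp₂
          (continuous_const : Continuous fun _ : {z : ↥(setA k n (j - 1) hkn) //
              (z : CLMSpace k n) ejk ∈ U} => T) hcomp1
        exact (hev.subtype_mk _).prodMk (hcomp2.subtype_mk _)
      · -- continuity of invFun
        have hg : Continuous fun w : ↥U × ↥(setA k n j hkn) => (w.2 : CLMSpace k n) :=
          continuous_subtype_val.comp continuous_snd
        have hu : Continuous fun w : ↥U × ↥(setA k n j hkn) =>
            (w.1 : EuclideanSpace ℂ (Fin n)) :=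
          continuous_subtype_val.comp continuous_fst
        have hrot : Continuous fun w : ↥U × ↥(setA k n j hkn) =>
            rotCLM b (w.1 : EuclideanSpace ℂ (Fin n)) :=
          (continuousOn_rot_right b).comp_continuous hu (fun w => denom_conj_ne w.1.2.1)
        have h1 := isBoundedBilinearMap_comp.continuous.comp₂
          (continuous_const : Continuous fun _ : ↥U × ↥(setA k n j hkn) => Tinv) hg
        have h2 := isBoundedBilinearMap_comp.continuous.comp₂ hrot h1
        exact (h2.subtype_mk _).subtype_mk _
  · ext f
    constructor
    · rintro ⟨⟨h1, h2⟩, h3⟩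
      refine ⟨h1, fun i hi => ?_⟩
      rcases Nat.lt_or_ge (i : ℕ) (j - 1) with h | h
      · exact h2 i h
      · have : i = (⟨j - 1, hj1k⟩ : Fin k) := by apply Fin.ext; simp only []; omega
        rw [this]
        exact h3
    · rintro ⟨h1, h2⟩
      exact ⟨⟨h1, fun i hi => h2 i (by omega)⟩, h2 ⟨j - 1, hj1k⟩ (by simp only []; omega)⟩


end
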